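/- arXiv:2512.04190 — 3 statements merged into one kernel-verified Lean document; each statement's English description precedes it below -/
import Mathlib

section
/- Consider the one-parameter family of coefficient vectors (0,1,c,0). Over the field ℚ(t) of rational functions in one variable t, the matrix of consequences M(0,1,t,0) has rank exactly 31; moreover, over ℚ, the matrix M(0,1,0,0) has rank exactly 26. -/
/-- First components `p_i` (1-indexed columns) of the 42 quadruples. -/
def colP : Fin 42 → ℕ :=
  ![4,8,11,13,14,1,4,8,11,13,14,1,4,8,11,13,14,1,5,9,12,15,16,2,17,24,26,27,28,7,19,29,34,36,37,10,2,7,10,3,23,33]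

/-- Second components `q_i`. -/
def colQ : Fin 42 → ℕ :=
  ![5,9,12,15,16,2,6,18,20,21,22,4,6,18,20,21,22,4,6,18,20,21,22,4,18,25,30,31,32,8,20,30,35,38,39,11,3,17,19,5,24,34]

/-- Third components `r_i`. -/
def colR : Fin 42 → ℕ :=
  ![21,31,38,40,41,13,17,24,26,27,28,7,18,25,30,31,32,8,18,25,30,31,32,8,20,30,35,38,39,11,21,31,38,40,41,13,15,23,29,9,26,36]

/-- Fourth components `s_i`. -/
def colS : Fin 42 → ℕ :=
  ![22,32,39,41,42,14,22,32,39,41,42,14,19,29,34,36,37,10,20,30,35,38,39,11,21,31,38,40,41,13,22,32,39,41,42,14,16,28,33,12,27,37]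

/-- The 42×42 matrix of consequences `M(a,b,c,d)` over a field `K`:
row `i` has entry `a` in column `p_i`, `b` in column `q_i`, `c` in column `r_i`,
`d` in column `s_i` (columns counted 1-based), and `0` elsewhere. -/
def consMatrix (K : Type*) [Field K] (a b c d : K) : Matrix (Fin 42) (Fin 42) K :=
  fun i j =>
    (if (j : ℕ) + 1 = colP i then a else 0) +
    (if (j : ℕ) + 1 = colQ i then b else 0) +
    (if (j : ℕ) + 1 = colR i then c else 0) +
    (if (j : ℕ) + 1 = colS i then d else 0)

namespace Stmt7aux
open Matrix

lemma colQ_bounds : ∀ i, 1 ≤ colQ i ∧ colQ i ≤ 42 := by decide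
lemma colR_bounds : ∀ i, 1 ≤ colR i ∧ colR i ≤ 42 := by decide

def qIdx (i : Fin 42) : Fin 42 := ⟨colQ i - 1, by have := colQ_bounds i; omega⟩
def rIdx (i : Fin 42) : Fin 42 := ⟨colR i - 1, by have := colR_bounds i; omega⟩

variable {K : Type*} [Field K]

lemma cons_apply (c : K) (i j : Fin 42) :
    consMatrix K 0 1 c 0 i j
      = (if j = qIdx i then (1:K) else 0) + c * (if j = rIdx i then (1:K) else 0) := by
  have hq := colQ_bounds i
  have hr := colR_bounds i
  have e1 : ((j : ℕ) + 1 = colQ i) ↔ j = qIdx i := by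
    simp only [qIdx, Fin.ext_iff]; constructor <;> omega
  have e2 : ((j : ℕ) + 1 = colR i) ↔ j = rIdx i := by
    simp only [rIdx, Fin.ext_iff]; constructor <;> omega
  simp only [consMatrix, e1, e2, ite_self, zero_add, add_zero, mul_ite, mul_one, mul_zero]

lemma consMulVec (c : K) (v : Fin 42 → K) (i : Fin 42) :
    (consMatrix K 0 1 c 0 *ᵥ v) i = v (qIdx i) + c * v (rIdx i) := by
  simp only [Matrix.mulVec, dotProduct, cons_apply, add_mul, ite_mul, one_mul, zero_mul,
    mul_ite, mul_one, mul_zero, Finset.sum_add_distrib, mul_assoc]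
  rw [Finset.sum_ite_eq' Finset.univ (qIdx i) v,
    Finset.sum_ite_eq' Finset.univ (rIdx i) (fun x => c * v x)]
  simp

/-- generic lower bound for rank via an invertible square submatrix -/
lemma rank_ge_of_det {n : ℕ} (M : Matrix (Fin 42) (Fin 42) K) (f g : Fin n → Fin 42)
    (hdet : (M.submatrix f g).det ≠ 0) : n ≤ M.rank := by
  have licol : LinearIndependent K (fun j : Fin n => fun i : Fin 42 => M i (g j)) := by
    rw [Fintype.linearIndependent_iff]
    intro cf hcf j
    have h0 : M.submatrix f g *ᵥ cf = 0 := by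
      funext i
      have h := congrFun hcf (f i)
      simp only [Finset.sum_apply, Pi.smul_apply, smul_eq_mul, Pi.zero_apply] at h
      simpa [Matrix.mulVec, dotProduct, Matrix.submatrix_apply, mul_comm] using h
    have hz := Matrix.eq_zero_of_mulVec_eq_zero hdet h0
    exact congrFun hz j
  have hmem : ∀ j, (fun i => M i (g j)) ∈ LinearMap.range M.mulVecLin := fun j =>
    ⟨Pi.single (g j) 1, by funext i; simp [Matrix.mulVecLin_apply]⟩
  have li2 : LinearIndependent K
      (fun j : Fin n => (⟨fun i => M i (g j), hmem j⟩ : LinearMap.range M.mulVecLin)) := by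
    apply LinearIndependent.of_comp (LinearMap.range M.mulVecLin).subtype
    exact licol
  have := li2.fintype_card_le_finrank
  simpa [Matrix.rank] using this

/-- generic upper bound for rank via independent kernel vectors -/
lemma rank_add_of_ker {m : ℕ} (M : Matrix (Fin 42) (Fin 42) K) (v : Fin m → Fin 42 → K)
    (hv : ∀ k, M *ᵥ v k = 0) (idx : Fin m → Fin 42)
    (hd : ∀ k l, v k (idx l) = if k = l then 1 else 0) : M.rank + m ≤ 42 := by
  have li : LinearIndependent K v := by
    rw [Fintype.linearIndependent_iff]
    intro gco hg l
    have h := congrFun hg (idx l)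
    simp only [Finset.sum_apply, Pi.smul_apply, smul_eq_mul, Pi.zero_apply, hd,
      mul_ite, mul_one, mul_zero] at h
    rwa [Finset.sum_ite_eq' Finset.univ l gco, if_pos (Finset.mem_univ l)] at h
  have hmem : ∀ k, v k ∈ LinearMap.ker M.mulVecLin := fun k => by
    simp [LinearMap.mem_ker, Matrix.mulVecLin_apply, hv k]
  have li2 : LinearIndependent K
      (fun k : Fin m => (⟨v k, hmem k⟩ : LinearMap.ker M.mulVecLin)) := by
    apply LinearIndependent.of_comp (LinearMap.ker M.mulVecLin).subtype
    exact li
  have h1 : m ≤ Module.finrank K (LinearMap.ker M.mulVecLin) := by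
    simpa using li2.fintype_card_le_finrank
  have h2 := LinearMap.finrank_range_add_finrank_ker M.mulVecLin
  rw [Module.finrank_fin_fun] at h2
  have h3 : M.rank = Module.finrank K (LinearMap.range M.mulVecLin) := rfl
  omega

end Stmt7aux

namespace Stmt7aux

/-! ### Data for part 1 (K = RatFunc ℚ, c = X) -/

def fR : Fin 31 → Fin 42 :=
  ![5,36,0,11,17,29,1,35,2,3,4,38,37,6,12,7,13,24,8,9,10,16,28,41,26,20,30,15,27,33,34]
def gC : Fin 31 → Fin 42 :=
  ![1,2,4,6,3,7,8,10,11,14,15,18,22,16,5,23,24,17,25,26,27,21,31,33,34,29,19,20,30,37,38]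

lemma tri1 : ∀ i j : Fin 31, j < i → gC j ≠ qIdx (fR i) ∧ gC j ≠ rIdx (fR i) := by decide

lemma diag1 : ∀ i : Fin 31,
    (gC i = qIdx (fR i) ∧ gC i ≠ rIdx (fR i)) ∨ (gC i ≠ qIdx (fR i) ∧ gC i = rIdx (fR i)) := by
  decide

def wK : Fin 11 → Fin 42 → ℤ :=
  ![![1,0,0,0,0,0,0,0,0,0,0,0,0,0,0,0,0,0,0,0,0,0,0,0,0,0,0,0,0,0,0,0,0,0,0,0,0,0,0,0,0,0],
    ![0,0,0,0,0,0,0,0,0,1,0,0,0,0,0,0,0,0,0,0,0,0,0,0,0,0,0,0,0,0,0,0,0,0,0,0,0,0,0,0,0,0],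
    ![0,-1,0,-1,0,0,1,1,0,0,-1,0,1,0,0,0,0,0,0,0,0,0,0,0,0,0,0,0,0,0,0,0,0,0,0,0,0,0,0,0,0,0],
    ![0,0,0,0,0,0,0,0,0,0,0,0,0,1,0,0,0,0,0,0,0,0,0,0,0,0,0,0,0,0,0,0,0,0,0,0,0,0,0,0,0,0],
    ![0,0,0,0,0,0,0,0,0,0,0,0,0,0,0,0,0,0,-1,0,0,0,0,0,0,0,0,0,1,0,0,0,0,0,0,0,0,0,0,0,0,0],
    ![0,0,0,0,0,0,0,0,0,0,0,0,0,0,0,0,0,0,0,0,0,0,0,0,0,0,0,0,0,0,0,0,1,0,0,0,0,0,0,0,0,0],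
    ![0,0,0,0,0,0,0,0,0,0,0,0,0,0,0,0,0,0,0,0,0,0,0,0,0,0,0,0,0,0,0,0,0,-1,0,1,0,0,0,0,0,0],
    ![0,0,0,0,0,0,0,0,0,0,0,0,0,0,0,0,0,0,0,0,0,0,0,0,0,0,0,0,0,0,0,0,0,0,0,0,1,0,0,0,0,0],
    ![0,0,1,0,1,1,0,0,-1,0,0,1,0,0,-1,0,-1,-1,0,1,-1,0,1,1,1,-1,1,0,0,-1,1,0,0,0,1,0,0,-1,0,1,0,0],
    ![0,0,0,0,0,0,0,0,0,0,0,0,0,0,0,-1,0,0,0,0,0,-1,0,0,0,0,0,1,0,0,0,1,0,0,0,0,0,0,-1,0,1,0],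
    ![0,0,0,0,0,0,0,0,0,0,0,0,0,0,0,0,0,0,0,0,0,0,0,0,0,0,0,0,0,0,0,0,0,0,0,0,0,0,0,0,0,1]]

def eK : Fin 11 → Fin 42 → ℕ :=
  ![![0,0,0,0,0,0,0,0,0,0,0,0,0,0,0,0,0,0,0,0,0,0,0,0,0,0,0,0,0,0,0,0,0,0,0,0,0,0,0,0,0,0],
    ![0,0,0,0,0,0,0,0,0,0,0,0,0,0,0,0,0,0,0,0,0,0,0,0,0,0,0,0,0,0,0,0,0,0,0,0,0,0,0,0,0,0],
    ![0,1,0,3,0,0,2,2,0,0,1,0,0,0,0,0,0,0,0,0,0,0,0,0,0,0,0,0,0,0,0,0,0,0,0,0,0,0,0,0,0,0],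
    ![0,0,0,0,0,0,0,0,0,0,0,0,0,0,0,0,0,0,0,0,0,0,0,0,0,0,0,0,0,0,0,0,0,0,0,0,0,0,0,0,0,0],
    ![0,0,0,0,0,0,0,0,0,0,0,0,0,0,0,0,0,0,1,0,0,0,0,0,0,0,0,0,0,0,0,0,0,0,0,0,0,0,0,0,0,0],
    ![0,0,0,0,0,0,0,0,0,0,0,0,0,0,0,0,0,0,0,0,0,0,0,0,0,0,0,0,0,0,0,0,0,0,0,0,0,0,0,0,0,0],
    ![0,0,0,0,0,0,0,0,0,0,0,0,0,0,0,0,0,0,0,0,0,0,0,0,0,0,0,0,0,0,0,0,0,1,0,0,0,0,0,0,0,0],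
    ![0,0,0,0,0,0,0,0,0,0,0,0,0,0,0,0,0,0,0,0,0,0,0,0,0,0,0,0,0,0,0,0,0,0,0,0,0,0,0,0,0,0],
    ![0,0,2,0,4,6,0,0,3,0,0,2,0,0,1,0,5,5,0,4,3,0,4,4,4,3,2,0,0,3,2,0,0,0,2,0,0,1,0,0,0,0],
    ![0,0,0,0,0,0,0,0,0,0,0,0,0,0,0,1,0,0,0,0,0,3,0,0,0,0,0,2,0,0,0,2,0,0,0,0,0,0,1,0,0,0],
    ![0,0,0,0,0,0,0,0,0,0,0,0,0,0,0,0,0,0,0,0,0,0,0,0,0,0,0,0,0,0,0,0,0,0,0,0,0,0,0,0,0,0]]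

def freeIdx : Fin 11 → Fin 42 := ![0,9,12,13,28,32,35,36,39,40,41]

lemma kcond : ∀ k (i : Fin 42),
    (wK k (qIdx i) = 0 ∧ wK k (rIdx i) = 0) ∨
    (wK k (qIdx i) = -wK k (rIdx i) ∧ eK k (qIdx i) = eK k (rIdx i) + 1) := by decide

lemma kdelta : ∀ k l, wK k (freeIdx l) = (if k = l then 1 else 0) ∧ eK k (freeIdx l) = 0 := by
  decide

/-! ### Data for part 2 (K = ℚ, c = 0) -/

def fR2 : Fin 26 → Fin 42 :=
  ![5,36,11,0,6,29,1,35,2,3,4,37,7,38,8,9,10,40,25,26,27,28,41,32,33,34]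
def gC2 : Fin 26 → Fin 42 :=
  ![1,2,3,4,5,7,8,10,11,14,15,16,17,18,19,20,21,23,24,29,30,31,33,34,37,38]
def nonQ : Fin 16 → Fin 42 := ![0,6,9,12,13,22,25,26,27,28,32,35,36,39,40,41]

lemma tri2 : ∀ i j : Fin 26, j < i → gC2 j ≠ qIdx (fR2 i) ∧ gC2 j ≠ rIdx (fR2 i) := by decide
lemma diag2 : ∀ i : Fin 26, gC2 i = qIdx (fR2 i) ∧ gC2 i ≠ rIdx (fR2 i) := by decide
lemma nonQ_ne : ∀ (k : Fin 16) (i : Fin 42), nonQ k ≠ qIdx i := by decide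
lemma nonQ_inj : ∀ k l : Fin 16, k ≠ l → nonQ k ≠ nonQ l := by decide

end Stmt7aux


namespace Stmt7aux

lemma upperTri_det_ne_zero {K : Type*} [Field K] {n : ℕ} (S : Matrix (Fin n) (Fin n) K)
    (htri : S.BlockTriangular id) (hdiag : ∀ i, S i i ≠ 0) : S.det ≠ 0 := by
  rw [Matrix.det_of_upperTriangular htri]
  exact Finset.prod_ne_zero_iff.mpr (fun i _ => hdiag i)

variable {K : Type*} [Field K]

lemma low2 (c : K) : 26 ≤ (consMatrix K 0 1 c 0).rank := by
  apply rank_ge_of_det _ fR2 gC2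
  apply upperTri_det_ne_zero
  · intro i j hij
    have h := tri2 i j hij
    rw [Matrix.submatrix_apply, cons_apply, if_neg h.1, if_neg h.2, mul_zero, add_zero]
  · intro i
    have h := diag2 i
    rw [Matrix.submatrix_apply, cons_apply, if_pos h.1, if_neg h.2, mul_zero, add_zero]
    exact one_ne_zero

lemma up2 : (consMatrix K 0 1 (0 : K) 0).rank + 16 ≤ 42 := by
  apply rank_add_of_ker _ (fun k => Pi.single (nonQ k) (1 : K)) ?_ nonQ ?_
  · intro k
    funext i
    rw [consMulVec]
    simp [Pi.single_apply, (nonQ_ne k i)]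
  · intro k l
    by_cases h : k = l
    · subst h; simp
    · simp [Pi.single_apply, h, Ne.symm (nonQ_inj k l h)]

lemma low1 : 31 ≤ (consMatrix (RatFunc ℚ) 0 1 RatFunc.X 0).rank := by
  apply rank_ge_of_det _ fR gC
  apply upperTri_det_ne_zero
  · intro i j hij
    have h := tri1 i j hij
    rw [Matrix.submatrix_apply, cons_apply, if_neg h.1, if_neg h.2, mul_zero, add_zero]
  · intro i
    rcases diag1 i with ⟨h1, h2⟩ | ⟨h1, h2⟩
    · rw [Matrix.submatrix_apply, cons_apply, if_pos h1, if_neg h2, mul_zero, add_zero]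
      exact one_ne_zero
    · rw [Matrix.submatrix_apply, cons_apply, if_neg h1, if_pos h2, mul_one, zero_add]
      exact RatFunc.X_ne_zero

lemma up1 : (consMatrix (RatFunc ℚ) 0 1 RatFunc.X 0).rank + 11 ≤ 42 := by
  apply rank_add_of_ker _
    (fun k j => (wK k j : RatFunc ℚ) * RatFunc.X ^ (eK k j)) ?_ freeIdx ?_
  · intro k
    funext i
    rw [consMulVec]
    simp only [Pi.zero_apply]
    rcases kcond k i with ⟨h1, h2⟩ | ⟨h1, h2⟩
    · simp only [h1, h2]
      simp
    · simp only [h1, h2]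
      push_cast
      ring
  · intro k l
    rcases kdelta k l with ⟨h1, h2⟩
    by_cases h : k = l
    · subst h; simp only [h1, h2]; simp
    · simp only [h1, h2]; simp [h]

end Stmt7aux

open Stmt7aux in
/-- For the one-parameter family `(0,1,c,0)`: over the rational function field `ℚ(t)`
the matrix of consequences `M(0,1,t,0)` has rank exactly 31, and over `ℚ` the matrix
`M(0,1,0,0)` has rank exactly 26. -/
theorem stmt_7 :
    (consMatrix (RatFunc ℚ) 0 1 RatFunc.X 0).rank = 31 ∧
    (consMatrix ℚ 0 1 0 0).rank = 26 := by
  have h1 := low1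
  have h2 := up1
  have h3 := low2 (0 : ℚ)
  have h4 := up2 (K := ℚ)
  exact ⟨by omega, by omega⟩
end

section
/- Consider the one-parameter family of coefficient vectors (0,0,1,d). Over the field ℚ(t) of rational functions in one variable t, the matrix of consequences M(0,0,1,t) has rank exactly 31; moreover, over ℚ, the matrix M(0,0,1,0) has rank exactly 26. -/
/-! ### Auxiliary data -/

/-- 0-based version of `colR`. -/
def rho : Fin 42 → Fin 42 :=
  ![20,30,37,39,40,12,16,23,25,26,27,6,17,24,29,30,31,7,17,24,29,30,31,7,19,29,34,37,38,10,20,30,37,39,40,12,14,22,28,8,25,35]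

/-- 0-based version of `colS`. -/
def sig : Fin 42 → Fin 42 :=
  ![21,31,38,40,41,13,21,31,38,40,41,13,18,28,33,35,36,9,19,29,34,37,38,10,20,30,37,39,40,12,21,31,38,40,41,13,15,27,32,11,26,36]

lemma cons_apply (K : Type*) [Field K] (d : K) (i j : Fin 42) :
    consMatrix K 0 0 1 d i j =
      (if j = rho i then (1 : K) else 0) + (if j = sig i then d else 0) := by
  have h1 : ∀ i j : Fin 42, ((j : ℕ) + 1 = colR i ↔ j = rho i) := by decide
  have h2 : ∀ i j : Fin 42, ((j : ℕ) + 1 = colS i ↔ j = sig i) := by decide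
  simp [consMatrix, h1 i j, h2 i j]

lemma mulVec_eq (K : Type*) [Field K] (d : K) (v : Fin 42 → K) (i : Fin 42) :
    (consMatrix K 0 0 1 d).mulVec v i = v (rho i) + d * v (sig i) := by
  simp only [Matrix.mulVec, dotProduct, cons_apply, add_mul, ite_mul, one_mul,
    zero_mul, Finset.sum_add_distrib, Finset.sum_ite_eq', Finset.mem_univ, if_true]

/-- Generic linear independence criterion via "delta" coordinates. -/
lemma li_of_delta {K : Type*} [Field K] {n m : ℕ} (W : Fin m → Fin n → K) (c : Fin m → Fin n)
    (h : ∀ k j : Fin m, W j (c k) = if j = k then 1 else 0) : LinearIndependent K W := by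
  rw [Fintype.linearIndependent_iff]
  intro g hg k
  have h0 := congrFun hg (c k)
  simpa [Finset.sum_apply, h, mul_ite, Finset.sum_ite_eq'] using h0

/-- Generic rank bound for a submatrix. -/
lemma rank_submatrix_le' {K : Type*} [Field K] {m n : ℕ} (A : Matrix (Fin n) (Fin n) K)
    (f g : Fin m → Fin n) : (A.submatrix f g).rank ≤ A.rank := by
  have h : A.submatrix f g =
      ((1 : Matrix (Fin n) (Fin n) K).submatrix f (Equiv.refl _)) *
        (A * ((1 : Matrix (Fin n) (Fin n) K).submatrix (Equiv.refl _) g)) := by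
    rw [Matrix.mul_submatrix_one (Equiv.refl _) g A, Matrix.one_submatrix_mul f (Equiv.refl _)]
    simp [Matrix.submatrix_submatrix]
  rw [h]
  exact le_trans (Matrix.rank_mul_le_right _ _) (Matrix.rank_mul_le_left _ _)

/-- Generic upper bound for the rank via explicit kernel vectors. -/
lemma rank_le_of_ker {K : Type*} [Field K] {n m : ℕ} (A : Matrix (Fin n) (Fin n) K)
    (W : Fin m → Fin n → K) (hW : LinearIndependent K W)
    (hker : ∀ k, A.mulVec (W k) = 0) : A.rank + m ≤ n := by
  have hle : Submodule.span K (Set.range W) ≤ LinearMap.ker A.mulVecLin := by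
    rw [Submodule.span_le]
    rintro _ ⟨k, rfl⟩
    simpa [LinearMap.mem_ker, Matrix.mulVecLin_apply] using hker k
  have h1 : m ≤ Module.finrank K (LinearMap.ker A.mulVecLin) := by
    calc m = Module.finrank K (Submodule.span K (Set.range W)) := by
              rw [finrank_span_eq_card hW, Fintype.card_fin]
      _ ≤ _ := Submodule.finrank_mono hle
  have h2 := LinearMap.finrank_range_add_finrank_ker A.mulVecLin
  rw [Module.finrank_fintype_fun_eq_card, Fintype.card_fin] at h2
  have h3 : A.rank = Module.finrank K (LinearMap.range A.mulVecLin) := rfl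
  omega

/-! ### Kernel data over `ℚ(t)` -/

/-- Signs of the entries of the 11 kernel vectors of `M(0,0,1,t)`. -/
def sgn : Fin 11 → Fin 42 → ℤ :=
  ![![1,0,0,0,0,0,0,0,0,0,0,0,0,0,0,0,0,0,0,0,0,0,0,0,0,0,0,0,0,0,0,0,0,0,0,0,0,0,0,0,0,0],
    ![0,1,0,0,0,0,0,0,0,0,0,0,0,0,0,0,0,0,0,0,0,0,0,0,0,0,0,0,0,0,0,0,0,0,0,0,0,0,0,0,0,0],
    ![0,0,1,0,0,0,0,0,0,0,0,0,0,0,0,0,0,0,0,0,0,0,0,0,0,0,0,0,0,0,0,0,0,0,0,0,0,0,0,0,0,0],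
    ![0,0,0,1,0,0,0,0,0,0,0,0,0,0,0,0,0,0,0,0,0,0,0,0,0,0,0,0,0,0,0,0,0,0,0,0,0,0,0,0,0,0],
    ![0,0,0,0,1,0,0,0,0,0,0,0,0,0,0,0,0,0,0,0,0,0,0,0,0,0,0,0,0,0,0,0,0,0,0,0,0,0,0,0,0,0],
    ![0,0,0,0,0,1,0,0,0,0,0,0,0,0,0,0,0,0,0,0,0,0,0,0,0,0,0,0,0,0,0,0,0,0,0,0,0,0,0,0,0,0],
    ![0,0,0,0,0,0,0,0,-1,0,0,1,0,0,0,0,0,0,0,0,0,0,0,0,0,0,0,0,0,0,0,0,0,0,0,0,0,0,0,0,0,0],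
    ![0,0,0,0,0,0,-1,-1,0,1,1,0,-1,1,0,0,0,0,0,0,0,0,0,0,0,0,0,0,0,0,0,0,0,0,0,0,0,0,0,0,0,0],
    ![0,0,0,0,0,0,0,0,0,0,0,0,0,0,-1,1,0,0,0,0,0,0,0,0,0,0,0,0,0,0,0,0,0,0,0,0,0,0,0,0,0,0],
    ![0,0,0,0,0,0,0,0,0,0,0,0,0,0,0,0,-1,-1,1,1,-1,1,0,0,0,0,0,0,0,0,0,0,0,0,0,0,0,0,0,0,0,0],
    ![0,0,0,0,0,0,0,0,0,0,0,0,0,0,0,0,0,0,0,0,0,0,1,1,1,-1,1,-1,-1,-1,1,-1,1,1,1,-1,1,-1,1,1,-1,1]]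

/-- Exponents of the entries of the 11 kernel vectors of `M(0,0,1,t)`. -/
def ex : Fin 11 → Fin 42 → ℕ :=
  ![![0,0,0,0,0,0,0,0,0,0,0,0,0,0,0,0,0,0,0,0,0,0,0,0,0,0,0,0,0,0,0,0,0,0,0,0,0,0,0,0,0,0],
    ![0,0,0,0,0,0,0,0,0,0,0,0,0,0,0,0,0,0,0,0,0,0,0,0,0,0,0,0,0,0,0,0,0,0,0,0,0,0,0,0,0,0],
    ![0,0,0,0,0,0,0,0,0,0,0,0,0,0,0,0,0,0,0,0,0,0,0,0,0,0,0,0,0,0,0,0,0,0,0,0,0,0,0,0,0,0],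
    ![0,0,0,0,0,0,0,0,0,0,0,0,0,0,0,0,0,0,0,0,0,0,0,0,0,0,0,0,0,0,0,0,0,0,0,0,0,0,0,0,0,0],
    ![0,0,0,0,0,0,0,0,0,0,0,0,0,0,0,0,0,0,0,0,0,0,0,0,0,0,0,0,0,0,0,0,0,0,0,0,0,0,0,0,0,0],
    ![0,0,0,0,0,0,0,0,0,0,0,0,0,0,0,0,0,0,0,0,0,0,0,0,0,0,0,0,0,0,0,0,0,0,0,0,0,0,0,0,0,0],
    ![0,0,0,0,0,0,0,0,1,0,0,0,0,0,0,0,0,0,0,0,0,0,0,0,0,0,0,0,0,0,0,0,0,0,0,0,0,0,0,0,0,0],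
    ![0,0,0,0,0,0,1,3,0,2,2,0,1,0,0,0,0,0,0,0,0,0,0,0,0,0,0,0,0,0,0,0,0,0,0,0,0,0,0,0,0,0],
    ![0,0,0,0,0,0,0,0,0,0,0,0,0,0,1,0,0,0,0,0,0,0,0,0,0,0,0,0,0,0,0,0,0,0,0,0,0,0,0,0,0,0],
    ![0,0,0,0,0,0,0,0,0,0,0,0,0,0,0,0,1,3,2,2,1,0,0,0,0,0,0,0,0,0,0,0,0,0,0,0,0,0,0,0,0,0],
    ![0,0,0,0,0,0,0,0,0,0,0,0,0,0,0,0,0,0,0,0,0,0,2,4,6,3,2,1,5,5,4,3,4,4,4,3,2,3,2,2,1,0]]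

/-- The 11 kernel vectors of `M(0,0,1,t)` over `ℚ(t)`. -/
noncomputable def Wt : Fin 11 → Fin 42 → RatFunc ℚ :=
  fun k j => (sgn k j : RatFunc ℚ) * RatFunc.X ^ ex k j

/-- Free coordinates (pivot positions of the kernel basis). -/
def fr : Fin 11 → Fin 42 := ![0,1,2,3,4,5,11,13,15,21,41]

/-- Free coordinates of `M(0,0,1,0)` over `ℚ`. -/
def fr0 : Fin 16 → Fin 42 := ![0,1,2,3,4,5,9,11,13,15,18,21,32,33,36,41]

/-- Kernel vectors of `M(0,0,1,0)`. -/
def W0 : Fin 16 → Fin 42 → ℚ := fun k j => if j = fr0 k then 1 else 0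

/-! ### Triangular submatrix data -/

def rowf : Fin 31 → Fin 42 :=
  ![39,38,13,19,37,10,36,20,17,23,29,5,16,15,14,25,12,18,24,0,11,9,8,2,7,1,21,27,3,4,6]

def colf : Fin 31 → Fin 42 :=
  ![8,32,28,24,22,27,14,34,9,7,10,12,36,35,33,29,18,17,19,20,6,26,25,38,23,31,30,37,39,40,16]

def rowf0 : Fin 26 → Fin 42 :=
  ![0,1,2,3,4,5,6,7,8,9,10,11,12,13,14,16,17,24,26,28,29,36,37,38,39,41]

def colf0 : Fin 26 → Fin 42 :=
  ![20,30,37,39,40,12,16,23,25,26,27,6,17,24,29,31,7,19,34,38,10,14,22,28,8,35]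

/-- For the one-parameter family `(0,0,1,d)`: over the rational function field `ℚ(t)`
the matrix of consequences `M(0,0,1,t)` has rank exactly 31, and over `ℚ` the matrix
`M(0,0,1,0)` has rank exactly 26. -/
theorem stmt_8 :
    (consMatrix (RatFunc ℚ) 0 0 1 RatFunc.X).rank = 31 ∧
    (consMatrix ℚ 0 0 1 0).rank = 26 := by
  constructor
  · -- rank over ℚ(t) is 31
    set A := consMatrix (RatFunc ℚ) 0 0 1 RatFunc.X with hA
    -- upper bound via 11 kernel vectors
    have hdelta : ∀ k j : Fin 11, Wt j (fr k) = if j = k then 1 else 0 := by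
      have hc : ∀ k j : Fin 11,
          (if j = k then (sgn j (fr k) = 1 ∧ ex j (fr k) = 0) else sgn j (fr k) = 0) := by
        decide
      intro k j
      have h0 := hc k j
      by_cases h : j = k
      · rw [if_pos h] at h0
        rw [if_pos h]
        simp [Wt, h0.1, h0.2]
      · rw [if_neg h] at h0
        rw [if_neg h]
        simp [Wt, h0]
    have hli : LinearIndependent (RatFunc ℚ) Wt := li_of_delta Wt fr hdelta
    have hker : ∀ k, A.mulVec (Wt k) = 0 := by
      have hc : ∀ k : Fin 11, ∀ i : Fin 42,
          (sgn k (rho i) = 0 ∧ sgn k (sig i) = 0) ∨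
          (sgn k (rho i) = -sgn k (sig i) ∧ ex k (rho i) = ex k (sig i) + 1) := by
        decide
      intro k
      funext i
      rw [hA, mulVec_eq]
      rcases hc k i with ⟨h1, h2⟩ | ⟨h1, h2⟩
      · simp [Wt, h1, h2]
      · simp only [Wt, h1, h2, Pi.zero_apply]
        push_cast
        ring
    have hub : A.rank + 11 ≤ 42 := rank_le_of_ker A Wt hli hker
    -- lower bound via a triangular 31×31 submatrix
    set B := A.submatrix rowf colf with hB
    have hBapp : ∀ i j : Fin 31, B i j =
        (if colf j = rho (rowf i) then (1 : RatFunc ℚ) else 0) +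
        (if colf j = sig (rowf i) then RatFunc.X else 0) := by
      intro i j
      rw [hB, Matrix.submatrix_apply, hA, cons_apply]
    have htri : B.BlockTriangular id := by
      have hc : ∀ i j : Fin 31, (j : ℕ) < (i : ℕ) →
          colf j ≠ rho (rowf i) ∧ colf j ≠ sig (rowf i) := by decide
      intro i j hij
      obtain ⟨h1, h2⟩ := hc i j hij
      rw [hBapp]
      simp [h1, h2]
    have hdiag : ∀ i : Fin 31, B i i ≠ 0 := by
      have hc : ∀ i : Fin 31,
          (colf i = rho (rowf i) ∧ colf i ≠ sig (rowf i)) ∨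
          (colf i ≠ rho (rowf i) ∧ colf i = sig (rowf i)) := by decide
      intro i
      rcases hc i with ⟨h1, h2⟩ | ⟨h1, h2⟩
      · rw [hBapp, if_pos h1, if_neg h2]
        simp
      · rw [hBapp, if_neg h1, if_pos h2]
        simp [RatFunc.X_ne_zero]
    have hdet : B.det ≠ 0 := by
      rw [Matrix.det_of_upperTriangular htri]
      exact Finset.prod_ne_zero_iff.2 fun i _ => hdiag i
    have hBrank : B.rank = 31 := by
      rw [Matrix.rank_of_isUnit B ((Matrix.isUnit_iff_isUnit_det B).2 hdet.isUnit),
        Fintype.card_fin]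
    have hlb : 31 ≤ A.rank := by
      rw [← hBrank]; exact rank_submatrix_le' A rowf colf
    omega
  · -- rank over ℚ is 26
    set A := consMatrix ℚ 0 0 1 0 with hA
    have hdelta : ∀ k j : Fin 16, W0 j (fr0 k) = if j = k then 1 else 0 := by
      have hc : ∀ k j : Fin 16, (fr0 k = fr0 j ↔ j = k) := by decide
      intro k j
      simp [W0, hc k j]
    have hli : LinearIndependent ℚ W0 := li_of_delta W0 fr0 hdelta
    have hker : ∀ k, A.mulVec (W0 k) = 0 := by
      have hc : ∀ k : Fin 16, ∀ i : Fin 42, rho i ≠ fr0 k := by decide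
      intro k
      funext i
      rw [hA, mulVec_eq]
      simp [W0, hc k i]
    have hub : A.rank + 16 ≤ 42 := rank_le_of_ker A W0 hli hker
    set B := A.submatrix rowf0 colf0 with hB
    have hBone : B = 1 := by
      have hc : ∀ i j : Fin 26, (colf0 j = rho (rowf0 i) ↔ i = j) := by decide
      ext i j
      rw [hB, Matrix.submatrix_apply, hA, cons_apply, Matrix.one_apply]
      by_cases h : i = j
      · rw [if_pos h, if_pos ((hc i j).2 h), ite_self, add_zero]
      · rw [if_neg h, if_neg (fun hh => h ((hc i j).1 hh)), ite_self, add_zero]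
    have hBrank : B.rank = 26 := by
      rw [hBone, Matrix.rank_one, Fintype.card_fin]
    have hlb : 26 ≤ A.rank := by
      rw [← hBrank]; exact rank_submatrix_le' A rowf0 colf0
    omega
end

section
/- Fix an integer n ≥ 2, a set A, and a map p : Aⁿ → A satisfying the n-ary associativity identities: for all 0 ≤ i < j ≤ n−1 and all a_1, …, a_{2n−1} ∈ A, p(a_1, …, a_i, p(a_{i+1}, …, a_{i+n}), a_{i+n+1}, …, a_{2n−1}) = p(a_1, …, a_j, p(a_{j+1}, …, a_{j+n}), a_{j+n+1}, …, a_{2n−1}). Then the value of any monomial is independent of the placement of the operation symbols: for any two planar n-ary trees T and T′ with the same number of leaves d, and for any list a of d elements of A, eval(T, a) = eval(T′, a). -/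
/-- A planar `n`-ary tree: either a leaf, or a node with `n` (ordered) children. -/
inductive NTree (n : ℕ) : Type
  | leaf : NTree n
  | node : (Fin n → NTree n) → NTree n

/-- The number of leaves of a planar `n`-ary tree. -/
def NTree.leaves {n : ℕ} : NTree n → ℕ
  | .leaf => 1
  | .node t => ∑ i, (t i).leaves

/-- Evaluation of a planar `n`-ary tree `T` on the list of inputs
`a off, a (off+1), …, a (off + leaves T - 1)`: a leaf returns the single input, and a
node applies `p` to the evaluations of its children on the consecutive left-to-right
blocks of inputs (child `i` starts at `off` plus the leaves of the earlier children). -/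
def NTree.evalFrom {n : ℕ} {A : Type*} (p : (Fin n → A) → A) :
    NTree n → ℕ → (ℕ → A) → A
  | .leaf, off, a => a off
  | .node t, off, a =>
      p fun i => (t i).evalFrom p (off + ∑ j : Fin n, if j < i then (t j).leaves else 0) a

def comb (n : ℕ) {A : Type*} (p : (Fin n → A) → A) (a : ℕ → A) : ℕ → ℕ → A
  | d, off =>
    if d < n ∨ n < 2 then a off
    else p fun i : Fin n =>
      if (i : ℕ) = 0 then comb n p a (d - (n - 1)) off
      else a (off + d - n + (i : ℕ))
termination_by d _ => d
decreasing_by simp_all; omega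

lemma comb_one {n : ℕ} {A : Type*} (hn : 2 ≤ n) (p : (Fin n → A) → A) (a : ℕ → A)
    (off : ℕ) : comb n p a 1 off = a off := by
  rw [comb]; rw [if_pos]; omega

lemma comb_big {n : ℕ} {A : Type*} (hn : 2 ≤ n) (p : (Fin n → A) → A) (a : ℕ → A)
    {d : ℕ} (hd : n ≤ d) (off : ℕ) :
    comb n p a d off = p fun i : Fin n =>
      if (i : ℕ) = 0 then comb n p a (d - (n - 1)) off
      else a (off + d - n + (i : ℕ)) := by
  rw [comb]; rw [if_neg]; omega

def sumBelow {n : ℕ} (d : Fin n → ℕ) (k : ℕ) : ℕ :=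
  ∑ j : Fin n, if (j : ℕ) < k then d j else 0

lemma sumBelow_zero {n : ℕ} (d : Fin n → ℕ) : sumBelow d 0 = 0 := by simp [sumBelow]

lemma sumBelow_succ {n : ℕ} (d : Fin n → ℕ) {k : ℕ} (hk : k < n) :
    sumBelow d (k + 1) = sumBelow d k + d ⟨k, hk⟩ := by
  unfold sumBelow
  have h : ∀ j : Fin n, (if (j : ℕ) < k + 1 then d j else 0)
      = (if (j : ℕ) < k then d j else 0) + (if j = ⟨k, hk⟩ then d j else 0) := by
    intro j
    rcases lt_trichotomy (j : ℕ) k with h | h | h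
    · rw [if_pos (by omega), if_pos h, if_neg (by simp [Fin.ext_iff]; omega)]; omega
    · rw [if_pos (by omega), if_neg (by omega), if_pos (by simp [Fin.ext_iff, h])]; omega
    · rw [if_neg (by omega), if_neg (by omega), if_neg (by simp [Fin.ext_iff]; omega)]
  rw [Finset.sum_congr rfl (fun j _ => h j), Finset.sum_add_distrib,
    Finset.sum_ite_eq' Finset.univ (⟨k, hk⟩ : Fin n) d]
  simp

lemma sumBelow_ge {n : ℕ} (d : Fin n → ℕ) {k : ℕ} (hk : n ≤ k) :
    sumBelow d k = ∑ j, d j := by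
  unfold sumBelow
  exact Finset.sum_congr rfl (fun j _ => by rw [if_pos (by omega)])

lemma sumBelow_congr {n : ℕ} {d d' : Fin n → ℕ} {k : ℕ}
    (h : ∀ j : Fin n, (j : ℕ) < k → d j = d' j) :
    sumBelow d k = sumBelow d' k := by
  unfold sumBelow
  refine Finset.sum_congr rfl (fun j _ => ?_)
  by_cases hj : (j : ℕ) < k
  · rw [if_pos hj, if_pos hj, h j hj]
  · rw [if_neg hj, if_neg hj]

lemma sumBelow_ones {n : ℕ} {d : Fin n → ℕ} {t k : ℕ} (ht : t ≤ k) (hk : k ≤ n)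
    (h1 : ∀ j : Fin n, t ≤ (j : ℕ) → (j : ℕ) < k → d j = 1) :
    sumBelow d k = sumBelow d t + (k - t) := by
  induction k, ht using Nat.le_induction with
  | base => simp
  | succ k hk' ih =>
    rw [sumBelow_succ d (by omega), ih (by omega) (fun j h1' h2' => h1 j h1' (by omega)),
      h1 ⟨k, by omega⟩ (by simpa using hk') (by simp)]
    omega

lemma measure_helper1 (n Dm R : ℕ) (hn : 2 ≤ n) (hD : n ≤ Dm) :
    (Dm - (n - 1)) * n + R < Dm * n + R := by
  have h1 : Dm - (n - 1) < Dm := by omega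
  have h2 : (Dm - (n - 1)) * n < Dm * n :=
    Nat.mul_lt_mul_of_lt_of_le h1 (le_refl n) (by omega)
  omega

lemma measure_helper2 (n W D R : ℕ) (hn : 2 ≤ n) (hD : n ≤ D) :
    n * W + ((D - (n - 1)) * (W + 1) + R) < 1 * W + (D * (W + 1) + R) := by
  obtain ⟨q, rfl⟩ : ∃ q, n = q + 1 := ⟨n - 1, by omega⟩
  obtain ⟨D', rfl⟩ : ∃ D', D = D' + q := ⟨D - q, by omega⟩
  simp only [Nat.add_sub_cancel]
  have h1 : (D' + q) * (W + 1) = D' * (W + 1) + (q * W + q) := by ring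
  have h2 : (q + 1) * W = q * W + W := by ring
  generalize q * W = P at *
  generalize D' * (W + 1) = X at *
  omega

lemma key {n : ℕ} (hn : 2 ≤ n) {A : Type*} (p : (Fin n → A) → A) (a : ℕ → A)
    (hassoc' : ∀ i j : ℕ, i < j → j < n → ∀ b : ℕ → A,
      p (fun k : Fin n => if (k : ℕ) < i then b k
          else if (k : ℕ) = i then p (fun l => b (i + (l : ℕ)))
          else b ((k : ℕ) + n - 1)) =
      p (fun k : Fin n => if (k : ℕ) < j then b k
          else if (k : ℕ) = j then p (fun l => b (j + (l : ℕ)))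
          else b ((k : ℕ) + n - 1))) :
    ∀ (N : ℕ) (d : Fin n → ℕ), (∑ i, d i * (2 * n - 1 - (i : ℕ))) = N →
      (∀ i, 1 ≤ d i ∧ (n - 1) ∣ (d i - 1)) → ∀ off : ℕ,
      p (fun i => comb n p a (d i) (off + sumBelow d (i : ℕ))) =
      comb n p a (∑ i, d i) off := by
  intro N
  induction N using Nat.strong_induction_on with
  | _ N IH =>
  intro d hM hv off
  by_cases hex : ∃ i : Fin n, d i ≠ 1
  · -- there is a non-leaf child; take the maximal one
    obtain ⟨m, hm, hmax⟩ : ∃ m : Fin n, d m ≠ 1 ∧ ∀ j : Fin n, (m : ℕ) < (j : ℕ) → d j = 1 := by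
      classical
      obtain ⟨i0, hi0⟩ := hex
      have hne : (Finset.univ.filter (fun i : Fin n => d i ≠ 1)).Nonempty :=
        ⟨i0, by simp [hi0]⟩
      refine ⟨(Finset.univ.filter (fun i : Fin n => d i ≠ 1)).max' hne, ?_, ?_⟩
      · have := Finset.max'_mem _ hne; simpa using this
      · intro j hj
        by_contra hj1
        have hjm : j ∈ Finset.univ.filter (fun i : Fin n => d i ≠ 1) := by simp [hj1]
        have := Finset.le_max' _ j hjm
        rw [Fin.le_def] at this
        omega
    have hD : n ≤ d m := by
      obtain ⟨h1, h2⟩ := hv m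
      have := Nat.le_of_dvd (by omega) h2
      omega
    by_cases hme : (m : ℕ) = n - 1
    · -- Case 1 : the last child is a node
      obtain ⟨b, hb⟩ : ∃ b : ℕ → A, b = fun k =>
          if hk : k < n - 1 then comb n p a (d ⟨k, by omega⟩) (off + sumBelow d k)
          else if k = n - 1 then comb n p a (d m - (n - 1)) (off + sumBelow d (n - 1))
          else a (off + sumBelow d (n - 1) + d m - n + (k - (n - 1))) := ⟨_, rfl⟩
      have hS1 : sumBelow d (n - 1) + d m = ∑ j, d j := by
        have h1 := sumBelow_succ d (show n - 1 < n by omega)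
        have h2 : n - 1 + 1 = n := by omega
        rw [h2, sumBelow_ge d (le_refl n)] at h1
        have h3 : (⟨n - 1, show n - 1 < n by omega⟩ : Fin n) = m := Fin.ext (by simp [hme])
        rw [h3] at h1
        omega
      have hSn : n ≤ ∑ j, d j := by omega
      set d' : Fin n → ℕ := Function.update d m (d m - (n - 1)) with hd'
      have hd'm : d' m = d m - (n - 1) := by rw [hd', Function.update_self]
      have hd'ne : ∀ j : Fin n, j ≠ m → d' j = d j := fun j hj => by
        rw [hd', Function.update_of_ne hj]
      have hd'sum : ∑ j, d' j = (∑ j, d j) - (n - 1) := by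
        rw [hd', Finset.sum_update_of_mem (Finset.mem_univ m)]
        have h4 := Finset.sum_eq_add_sum_sdiff_singleton_of_mem (Finset.mem_univ m) d
        omega
      have hd'v : ∀ i, 1 ≤ d' i ∧ (n - 1) ∣ (d' i - 1) := by
        intro i
        by_cases hi : i = m
        · subst hi
          rw [hd'm]
          obtain ⟨h1, h2⟩ := hv i
          refine ⟨by omega, ?_⟩
          have h5 : d i - (n - 1) - 1 = (d i - 1) - (n - 1) := by omega
          rw [h5]
          exact Nat.dvd_sub h2 dvd_rfl
        · rw [hd'ne i hi]; exact hv i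
      have hd'M : (∑ i, d' i * (2 * n - 1 - (i : ℕ))) < N := by
        have hfe : ∀ j : Fin n, d' j * (2 * n - 1 - (j : ℕ))
            = Function.update (fun j : Fin n => d j * (2 * n - 1 - (j : ℕ))) m
              ((d m - (n - 1)) * (2 * n - 1 - (m : ℕ))) j := by
          intro j
          by_cases hj : j = m
          · subst hj; rw [hd'm, Function.update_self]
          · rw [hd'ne j hj, Function.update_of_ne hj]
        calc ∑ j, d' j * (2 * n - 1 - (j : ℕ))
            = ∑ j, Function.update (fun j : Fin n => d j * (2 * n - 1 - (j : ℕ))) m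
              ((d m - (n - 1)) * (2 * n - 1 - (m : ℕ))) j :=
              Finset.sum_congr rfl (fun j _ => hfe j)
          _ = (d m - (n - 1)) * (2 * n - 1 - (m : ℕ))
              + ∑ j ∈ Finset.univ \ {m}, d j * (2 * n - 1 - (j : ℕ)) :=
              Finset.sum_update_of_mem (Finset.mem_univ m) _ _
          _ < d m * (2 * n - 1 - (m : ℕ))
              + ∑ j ∈ Finset.univ \ {m}, d j * (2 * n - 1 - (j : ℕ)) := by
              have hw : 2 * n - 1 - (m : ℕ) = n := by omega
              rw [hw]
              exact measure_helper1 n (d m) _ hn hD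
          _ = ∑ j, d j * (2 * n - 1 - (j : ℕ)) :=
              (Finset.sum_eq_add_sum_sdiff_singleton_of_mem (Finset.mem_univ m)
                (fun j : Fin n => d j * (2 * n - 1 - (j : ℕ)))).symm
          _ = N := hM
      have hIH := IH _ hd'M d' rfl hd'v off
      rw [hd'sum] at hIH
      have hinner0 : (fun l : Fin n => b ((0 : ℕ) + (l : ℕ)))
          = (fun i : Fin n => comb n p a (d' i) (off + sumBelow d' (i : ℕ))) := by
        funext l
        simp only [hb, Nat.zero_add]
        by_cases hl : (l : ℕ) < n - 1
        · rw [dif_pos hl]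
          have h2 : d' l = d l := hd'ne l (fun h => by rw [h] at hl; omega)
          have h3 : sumBelow d l = sumBelow d' l :=
            sumBelow_congr (fun j hj => (hd'ne j (fun h => by rw [h] at hj; omega)).symm)
          rw [h2, ← h3, Fin.eta]
        · rw [dif_neg hl, if_pos (show (l : ℕ) = n - 1 by omega)]
          have hlm : l = m := Fin.ext (by omega)
          have h3 : sumBelow d (n - 1) = sumBelow d' (n - 1) :=
            sumBelow_congr (fun j hj => (hd'ne j (fun h => by rw [h] at hj; omega)).symm)
          rw [hlm, hd'm, h3]
          have h4 : ((m : ℕ)) = n - 1 := hme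
          rw [h4]
      calc p (fun i => comb n p a (d i) (off + sumBelow d (i : ℕ)))
          = p (fun k : Fin n => if (k : ℕ) < n - 1 then b k
              else if (k : ℕ) = n - 1 then p (fun l => b ((n - 1) + (l : ℕ)))
              else b ((k : ℕ) + n - 1)) := by
            congr 1
            funext k
            by_cases hk : (k : ℕ) < n - 1
            · rw [if_pos hk]
              simp only [hb]
              rw [dif_pos hk, Fin.eta]
            · rw [if_neg hk, if_pos (show (k : ℕ) = n - 1 by omega)]
              have hkm : k = m := Fin.ext (by omega)
              rw [hkm, show ((m : ℕ)) = n - 1 from hme, comb_big hn p a hD]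
              congr 1
              funext l
              simp only [hb]
              by_cases hl : (l : ℕ) = 0
              · rw [if_pos hl, show n - 1 + (l : ℕ) = n - 1 by omega]
                rw [dif_neg (by omega), if_pos rfl]
              · rw [if_neg hl]
                rw [dif_neg (by omega), if_neg (by omega)]
                congr 1
                omega
        _ = p (fun k : Fin n => if (k : ℕ) < 0 then b k
              else if (k : ℕ) = 0 then p (fun l => b ((0 : ℕ) + (l : ℕ)))
              else b ((k : ℕ) + n - 1)) :=
            (hassoc' 0 (n - 1) (by omega) (by omega) b).symm
        _ = comb n p a (∑ i, d i) off := by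
            rw [comb_big hn p a hSn off]
            congr 1
            funext k
            rw [if_neg (show ¬ ((k : ℕ) < 0) by omega)]
            by_cases hk : (k : ℕ) = 0
            · rw [if_pos hk, if_pos hk, hinner0, hIH]
            · rw [if_neg hk, if_neg hk]
              simp only [hb]
              rw [dif_neg (by omega), if_neg (by omega)]
              congr 1
              omega
    · -- Case 2 : some middle child is a node, later children are leaves
      have hmlt : (m : ℕ) < n - 1 := by have := m.isLt; omega
      obtain ⟨b, hb⟩ : ∃ b : ℕ → A, b = fun k =>
          if hk : k < (m : ℕ) then comb n p a (d ⟨k, by omega⟩) (off + sumBelow d k)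
          else if k = (m : ℕ) then comb n p a (d m - (n - 1)) (off + sumBelow d (m : ℕ))
          else a (off + sumBelow d (m : ℕ) + d m - n + (k - (m : ℕ))) := ⟨_, rfl⟩
      set m1 : Fin n := ⟨(m : ℕ) + 1, by omega⟩ with hm1
      have hm1v : (m1 : ℕ) = (m : ℕ) + 1 := rfl
      have hmne : m ≠ m1 := fun h => by
        have : (m : ℕ) = (m1 : ℕ) := by rw [h]
        omega
      have hdm1 : d m1 = 1 := hmax m1 (by omega)
      set d' : Fin n → ℕ := Function.update (Function.update d m (d m - (n - 1))) m1 n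
        with hd'
      have hd'm1 : d' m1 = n := by rw [hd', Function.update_self]
      have hd'm : d' m = d m - (n - 1) := by
        rw [hd', Function.update_of_ne hmne, Function.update_self]
      have hd'ne : ∀ j : Fin n, j ≠ m → j ≠ m1 → d' j = d j := fun j hj hj1 => by
        rw [hd', Function.update_of_ne hj1, Function.update_of_ne hj]
      have hsuccm : sumBelow d ((m : ℕ) + 1) = sumBelow d (m : ℕ) + d m := by
        rw [sumBelow_succ d m.isLt, Fin.eta]
      have honesd : ∀ k : ℕ, (m : ℕ) < k → k ≤ n →
          sumBelow d k = sumBelow d (m : ℕ) + d m + (k - ((m : ℕ) + 1)) := by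
        intro k h1 h2
        rw [sumBelow_ones (t := (m : ℕ) + 1) (by omega) h2
          (fun j hj1 hj2 => hmax j (by omega)), hsuccm]
      -- offsets for d'
      have hsbm : sumBelow d' (m : ℕ) = sumBelow d (m : ℕ) :=
        sumBelow_congr (fun j hj => hd'ne j
          (fun h => by rw [h] at hj; omega) (fun h => by rw [h] at hj; omega))
      have hsm1 : sumBelow d' ((m : ℕ) + 1) = sumBelow d (m : ℕ) + (d m - (n - 1)) := by
        rw [sumBelow_succ d' m.isLt, Fin.eta, hd'm, hsbm]
      have hsm2 : sumBelow d' ((m : ℕ) + 2) = sumBelow d (m : ℕ) + (d m - (n - 1)) + n := by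
        have h1 : (m : ℕ) + 1 < n := by omega
        have h2 : (⟨(m : ℕ) + 1, h1⟩ : Fin n) = m1 := rfl
        rw [show (m : ℕ) + 2 = ((m : ℕ) + 1) + 1 by omega, sumBelow_succ d' h1, h2,
          hd'm1, hsm1]
      have hsk : ∀ k : ℕ, (m : ℕ) + 1 < k → k ≤ n →
          sumBelow d' k = sumBelow d (m : ℕ) + (d m - (n - 1)) + n + (k - ((m : ℕ) + 2)) := by
        intro k h1 h2
        rw [sumBelow_ones (t := (m : ℕ) + 2) (by omega) h2 ?ones, hsm2]
        case ones =>
          intro j hj1 hj2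
          rw [hd'ne j (fun h => by rw [h] at hj1; omega)
            (fun h => by rw [h, hm1v] at hj1; omega)]
          exact hmax j (by omega)
      have hd'sum : ∑ j, d' j = ∑ j, d j := by
        have e1 : ∑ j, d' j = n + ∑ j ∈ Finset.univ \ {m1},
            Function.update d m (d m - (n - 1)) j := by
          rw [hd']
          exact Finset.sum_update_of_mem (Finset.mem_univ m1) _ _
        have hmmem : m ∈ Finset.univ \ {m1} := by simp [hmne]
        have e2 : ∑ j ∈ Finset.univ \ {m1}, Function.update d m (d m - (n - 1)) j
            = (d m - (n - 1)) + ∑ j ∈ (Finset.univ \ {m1}) \ {m}, d j :=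
          Finset.sum_update_of_mem hmmem _ _
        have e3 : ∑ j, d j = d m1 + ∑ j ∈ Finset.univ \ {m1}, d j :=
          Finset.sum_eq_add_sum_sdiff_singleton_of_mem (Finset.mem_univ m1) d
        have e4 : ∑ j ∈ Finset.univ \ {m1}, d j
            = d m + ∑ j ∈ (Finset.univ \ {m1}) \ {m}, d j :=
          Finset.sum_eq_add_sum_sdiff_singleton_of_mem hmmem d
        omega
      have hd'v : ∀ i, 1 ≤ d' i ∧ (n - 1) ∣ (d' i - 1) := by
        intro i
        by_cases hi1 : i = m1
        · subst hi1
          rw [hd'm1]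
          exact ⟨by omega, ⟨1, by omega⟩⟩
        · by_cases hi : i = m
          · subst hi
            rw [hd'm]
            obtain ⟨h1, h2⟩ := hv i
            refine ⟨by omega, ?_⟩
            have h5 : d i - (n - 1) - 1 = (d i - 1) - (n - 1) := by omega
            rw [h5]
            exact Nat.dvd_sub h2 dvd_rfl
          · rw [hd'ne i hi hi1]; exact hv i
      have hd'M : (∑ i, d' i * (2 * n - 1 - (i : ℕ))) < N := by
        have hfe : ∀ j : Fin n, d' j * (2 * n - 1 - (j : ℕ))
            = Function.update (Function.update (fun j : Fin n => d j * (2 * n - 1 - (j : ℕ)))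
                m ((d m - (n - 1)) * (2 * n - 1 - (m : ℕ))))
              m1 (n * (2 * n - 1 - ((m1 : ℕ)))) j := by
          intro j
          by_cases hj1 : j = m1
          · subst hj1; rw [hd'm1, Function.update_self]
          · rw [Function.update_of_ne hj1]
            by_cases hj : j = m
            · subst hj; rw [hd'm, Function.update_self]
            · rw [hd'ne j hj hj1, Function.update_of_ne hj]
        have hmmem : m ∈ Finset.univ \ {m1} := by simp [hmne]
        have e1 : ∑ j, d' j * (2 * n - 1 - (j : ℕ))
            = n * (2 * n - 1 - ((m1 : ℕ)))
              + ((d m - (n - 1)) * (2 * n - 1 - (m : ℕ))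
                + ∑ j ∈ (Finset.univ \ {m1}) \ {m}, d j * (2 * n - 1 - (j : ℕ))) := by
          rw [Finset.sum_congr rfl (fun j _ => hfe j),
            Finset.sum_update_of_mem (Finset.mem_univ m1) _ _,
            Finset.sum_update_of_mem hmmem _ _]
        have e2 : N = d m1 * (2 * n - 1 - ((m1 : ℕ)))
              + (d m * (2 * n - 1 - (m : ℕ))
                + ∑ j ∈ (Finset.univ \ {m1}) \ {m}, d j * (2 * n - 1 - (j : ℕ))) := by
          rw [← hM, Finset.sum_eq_add_sum_sdiff_singleton_of_mem (Finset.mem_univ m1)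
            (fun j : Fin n => d j * (2 * n - 1 - (j : ℕ))),
            Finset.sum_eq_add_sum_sdiff_singleton_of_mem hmmem
            (fun j : Fin n => d j * (2 * n - 1 - (j : ℕ)))]
        rw [e1, e2, hdm1, hm1v,
          show 2 * n - 1 - (m : ℕ) = (2 * n - 1 - ((m : ℕ) + 1)) + 1 by omega]
        exact measure_helper2 n (2 * n - 1 - ((m : ℕ) + 1)) (d m) _ hn hD
      have hIH := IH _ hd'M d' rfl hd'v off
      rw [hd'sum] at hIH
      calc p (fun i => comb n p a (d i) (off + sumBelow d (i : ℕ)))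
          = p (fun k : Fin n => if (k : ℕ) < (m : ℕ) then b k
              else if (k : ℕ) = (m : ℕ) then p (fun l => b ((m : ℕ) + (l : ℕ)))
              else b ((k : ℕ) + n - 1)) := by
            congr 1
            funext k
            by_cases hk : (k : ℕ) < (m : ℕ)
            · rw [if_pos hk]
              simp only [hb]
              rw [dif_pos hk, Fin.eta]
            · by_cases hk2 : (k : ℕ) = (m : ℕ)
              · rw [if_neg hk, if_pos hk2]
                have hkm : k = m := Fin.ext hk2
                rw [hkm, comb_big hn p a hD]
                congr 1
                funext l
                simp only [hb]
                by_cases hl : (l : ℕ) = 0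
                · rw [if_pos hl, show (m : ℕ) + (l : ℕ) = (m : ℕ) by omega]
                  rw [dif_neg (by omega), if_pos rfl]
                · rw [if_neg hl]
                  rw [dif_neg (by omega), if_neg (by omega)]
                  congr 1
                  omega
              · rw [if_neg hk, if_neg hk2]
                have hd1 : d k = 1 := hmax k (by omega)
                rw [hd1, comb_one hn]
                simp only [hb]
                rw [dif_neg (by omega), if_neg (by omega)]
                have ho := honesd (k : ℕ) (by omega) (by omega)
                congr 1
                omega
        _ = p (fun k : Fin n => if (k : ℕ) < (m : ℕ) + 1 then b k
              else if (k : ℕ) = (m : ℕ) + 1 then p (fun l => b (((m : ℕ) + 1) + (l : ℕ)))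
              else b ((k : ℕ) + n - 1)) :=
            hassoc' (m : ℕ) ((m : ℕ) + 1) (by omega) (by omega) b
        _ = p (fun i => comb n p a (d' i) (off + sumBelow d' (i : ℕ))) := by
            congr 1
            funext k
            by_cases hk : (k : ℕ) < (m : ℕ)
            · rw [if_pos (by omega)]
              simp only [hb]
              rw [dif_pos hk]
              have h2 : d' k = d k := hd'ne k
                (fun h => by rw [h] at hk; omega) (fun h => by rw [h, hm1v] at hk; omega)
              have h3 : sumBelow d' (k : ℕ) = sumBelow d (k : ℕ) :=
                sumBelow_congr (fun j hj => hd'ne j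
                  (fun h => by rw [h] at hj; omega)
                  (fun h => by rw [h, hm1v] at hj; omega))
              rw [h2, h3, Fin.eta]
            · by_cases hk2 : (k : ℕ) = (m : ℕ)
              · rw [if_pos (by omega)]
                simp only [hb]
                rw [dif_neg (by omega), if_pos hk2]
                have hkm : k = m := Fin.ext hk2
                rw [hkm, hd'm, hsbm]
              · by_cases hk3 : (k : ℕ) = (m : ℕ) + 1
                · rw [if_neg (by omega), if_pos hk3]
                  have hkm1 : k = m1 := Fin.ext (by rw [hk3, hm1v])
                  rw [hkm1, hd'm1, hm1v, hsm1, comb_big hn p a (le_refl n)]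
                  congr 1
                  funext l
                  simp only [hb]
                  rw [dif_neg (by omega), if_neg (by omega)]
                  by_cases hl : (l : ℕ) = 0
                  · rw [if_pos hl, show n - (n - 1) = 1 by omega, comb_one hn]
                    congr 1
                    omega
                  · rw [if_neg hl]
                    congr 1
                    omega
                · rw [if_neg (by omega), if_neg hk3]
                  simp only [hb]
                  rw [dif_neg (by omega), if_neg (by omega)]
                  have hd1 : d' k = 1 := by
                    rw [hd'ne k (fun h => by rw [h] at hk2; exact hk2 rfl)
                      (fun h => by rw [h] at hk3; exact hk3 hm1v)]
                    exact hmax k (by omega)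
                  rw [hd1, comb_one hn]
                  have ho := hsk (k : ℕ) (by omega) (by omega)
                  congr 1
                  omega
        _ = comb n p a (∑ i, d i) off := hIH
  · -- all children are leaves
    push_neg at hex
    have hsum : (∑ i, d i) = n := by
      rw [Finset.sum_congr rfl (fun i _ => hex i)]; simp
    rw [hsum, comb_big hn p a (le_refl n) off]
    congr 1
    funext k
    rw [hex k, comb_one hn]
    have hsb : sumBelow d (k : ℕ) = (k : ℕ) := by
      have := sumBelow_ones (t := 0) (k := (k : ℕ)) (d := d) (by omega) (by omega)
        (fun j _ _ => hex j)
      rw [this, sumBelow_zero]; omega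
    rw [hsb]
    by_cases hk : (k : ℕ) = 0
    · rw [if_pos hk, hk]
      have : n - (n - 1) = 1 := by omega
      rw [this, comb_one hn]
      norm_num
    · rw [if_neg hk]
      congr 1
      omega

lemma leaves_valid {n : ℕ} (hn : 2 ≤ n) (T : NTree n) :
    1 ≤ T.leaves ∧ (n - 1) ∣ (T.leaves - 1) := by
  induction T with
  | leaf => exact ⟨Nat.le_refl 1, dvd_zero _⟩
  | node t ih =>
    have h1 : ∀ i : Fin n, (t i).leaves = ((t i).leaves - 1) + 1 := fun i => by
      have := (ih i).1; omega
    have hsum : (NTree.node t).leaves = (∑ i, ((t i).leaves - 1)) + n := by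
      show (∑ i, (t i).leaves) = _
      rw [Finset.sum_congr rfl (fun i _ => h1 i), Finset.sum_add_distrib]
      simp
    constructor
    · rw [hsum]; omega
    · rw [hsum, show (∑ i, ((t i).leaves - 1)) + n - 1
        = (∑ i, ((t i).leaves - 1)) + (n - 1) by omega]
      exact Dvd.dvd.add (Finset.dvd_sum (fun i _ => (ih i).2)) dvd_rfl

lemma tree_eval_eq_comb {n : ℕ} (hn : 2 ≤ n) {A : Type*} (p : (Fin n → A) → A) (a : ℕ → A)
    (hassoc' : ∀ i j : ℕ, i < j → j < n → ∀ b : ℕ → A,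
      p (fun k : Fin n => if (k : ℕ) < i then b k
          else if (k : ℕ) = i then p (fun l => b (i + (l : ℕ)))
          else b ((k : ℕ) + n - 1)) =
      p (fun k : Fin n => if (k : ℕ) < j then b k
          else if (k : ℕ) = j then p (fun l => b (j + (l : ℕ)))
          else b ((k : ℕ) + n - 1))) :
    ∀ (T : NTree n) (off : ℕ), T.evalFrom p off a = comb n p a T.leaves off := by
  intro T
  induction T with
  | leaf => intro off; rw [NTree.evalFrom, NTree.leaves, comb_one hn]
  | node t ih =>
    intro off
    rw [NTree.evalFrom, NTree.leaves]
    have h1 : p (fun i => (t i).evalFrom p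
          (off + ∑ j : Fin n, if j < i then (t j).leaves else 0) a)
        = p (fun i => comb n p a ((t i).leaves)
          (off + sumBelow (fun j => (t j).leaves) (i : ℕ))) := by
      congr 1
      funext i
      have hsum : (∑ j : Fin n, if j < i then (t j).leaves else 0)
          = sumBelow (fun j => (t j).leaves) (i : ℕ) := by
        unfold sumBelow
        refine Finset.sum_congr rfl (fun j _ => ?_)
        rcases lt_or_ge (j : ℕ) (i : ℕ) with hj | hj
        · rw [if_pos hj, if_pos (Fin.lt_def.mpr hj)]
        · rw [if_neg (by omega), if_neg (fun hc => by omega)]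
      rw [ih i, hsum]
    rw [h1]
    exact key hn p a hassoc' _ (fun j => (t j).leaves) rfl
      (fun i => leaves_valid hn (t i)) off


/-- If `p : Aⁿ → A` satisfies the `n`-ary associativity identities, then the value of
any monomial is independent of the placement of the operation symbols: any two planar
`n`-ary trees with the same number of leaves evaluate equally on any list of inputs
(here `a : ℕ → A`, with `a 0, a 1, …` the entries of the list, read left to right). -/
theorem stmt_13 (n : ℕ) (hn : 2 ≤ n) (A : Type*) (p : (Fin n → A) → A)
    (hassoc : ∀ i j : Fin n, i < j → ∀ a : ℕ → A,
      p (fun k => if (k : ℕ) < (i : ℕ) then a k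
          else if (k : ℕ) = (i : ℕ) then p (fun l => a ((i : ℕ) + (l : ℕ)))
          else a ((k : ℕ) + n - 1)) =
      p (fun k => if (k : ℕ) < (j : ℕ) then a k
          else if (k : ℕ) = (j : ℕ) then p (fun l => a ((j : ℕ) + (l : ℕ)))
          else a ((k : ℕ) + n - 1)))
    (T T' : NTree n) (h : T.leaves = T'.leaves) (a : ℕ → A) :
    T.evalFrom p 0 a = T'.evalFrom p 0 a := by
  have hassoc' : ∀ i j : ℕ, i < j → j < n → ∀ b : ℕ → A,
      p (fun k : Fin n => if (k : ℕ) < i then b k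
          else if (k : ℕ) = i then p (fun l => b (i + (l : ℕ)))
          else b ((k : ℕ) + n - 1)) =
      p (fun k : Fin n => if (k : ℕ) < j then b k
          else if (k : ℕ) = j then p (fun l => b (j + (l : ℕ)))
          else b ((k : ℕ) + n - 1)) := by
    intro i j hij hjn b
    exact hassoc ⟨i, by omega⟩ ⟨j, hjn⟩ (by rw [Fin.lt_def]; exact hij) b
  rw [tree_eval_eq_comb hn p a hassoc', tree_eval_eq_comb hn p a hassoc', h]
end
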